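/- arXiv:1407.1067 — 2 statements merged into one kernel-verified Lean document; each statement's English description precedes it below -/
import Mathlib

section
/- Let ρ and σ be states (positive semidefinite d×d complex matrices of trace 1) with Tr(ρ^α σ^{1−α}) > 0, let ε ∈ (0,1) and α ∈ (0,1). Then β_ε(ρ‖σ) ≤ exp(−D_α^old(ρ‖σ) + (α/(1−α))·log(1/ε) − h₂(α)/(1−α)), where h₂(α) := −α·log α − (1−α)·log(1−α) is the binary entropy function. -/
open scoped BigOperators ComplexOrder

/-- Power of a Hermitian matrix taken on its support: eigenvalue 0 maps to 0,
eigenvalue x > 0 maps to x ^ α. Junk value 0 for non-Hermitian matrices. -/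
noncomputable def mPow {d : ℕ} (A : Matrix (Fin d) (Fin d) ℂ) (α : ℝ) :
    Matrix (Fin d) (Fin d) ℂ :=
  if hA : A.IsHermitian then
    (hA.eigenvectorUnitary : Matrix (Fin d) (Fin d) ℂ) *
      Matrix.diagonal (fun i =>
        (((if hA.eigenvalues i = 0 then 0 else hA.eigenvalues i ^ α) : ℝ) : ℂ)) *
      star (hA.eigenvectorUnitary : Matrix (Fin d) (Fin d) ℂ)
  else 0

/-- Logarithm of a Hermitian matrix taken on its support (0 maps to 0). -/
noncomputable def mLog {d : ℕ} (A : Matrix (Fin d) (Fin d) ℂ) :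
    Matrix (Fin d) (Fin d) ℂ :=
  if hA : A.IsHermitian then
    (hA.eigenvectorUnitary : Matrix (Fin d) (Fin d) ℂ) *
      Matrix.diagonal (fun i => ((Real.log (hA.eigenvalues i) : ℝ) : ℂ)) *
      star (hA.eigenvectorUnitary : Matrix (Fin d) (Fin d) ℂ)
  else 0

/-- supp A ⊆ supp B : the range of A is contained in the range of B. -/
def suppLe {d : ℕ} (A B : Matrix (Fin d) (Fin d) ℂ) : Prop :=
  LinearMap.range (Matrix.toLin' A) ≤ LinearMap.range (Matrix.toLin' B)

/-- The old (Petz-type) Rényi α-divergence of states. -/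
noncomputable def Dold {d : ℕ} (ρ σ : Matrix (Fin d) (Fin d) ℂ) (α : ℝ) : ℝ :=
  (α - 1)⁻¹ * Real.log (((mPow ρ α * mPow σ (1 - α)).trace).re)

/-- The optimal type II error for testing ω against τ with the type I error
bounded by ε. -/
noncomputable def betaErr {d : ℕ} (ε : ℝ) (ω τ : Matrix (Fin d) (Fin d) ℂ) : ℝ :=
  sInf {x : ℝ | ∃ T : Matrix (Fin d) (Fin d) ℂ,
    T.PosSemidef ∧ (1 - T).PosSemidef ∧
    ((ω * (1 - T)).trace).re ≤ ε ∧ x = ((τ * T).trace).re}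


namespace BetaBound

open Matrix MeasureTheory Set Complex

variable {d : ℕ} {A B X Y : Matrix (Fin d) (Fin d) ℂ}

local notation "Mat" => Matrix (Fin d) (Fin d) ℂ

lemma star_U_mul_U (hA : A.IsHermitian) :
    star (hA.eigenvectorUnitary : Mat) * (hA.eigenvectorUnitary : Mat) = 1 :=
  Unitary.star_mul_self_of_mem (SetLike.coe_mem _)

lemma U_mul_star_U (hA : A.IsHermitian) :
    (hA.eigenvectorUnitary : Mat) * star (hA.eigenvectorUnitary : Mat) = 1 :=
  Unitary.mul_star_self_of_mem (SetLike.coe_mem _)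

lemma conj_mul_conj (hA : A.IsHermitian) (X Y : Mat) :
    ((hA.eigenvectorUnitary : Mat) * X * star (hA.eigenvectorUnitary : Mat)) *
      ((hA.eigenvectorUnitary : Mat) * Y * star (hA.eigenvectorUnitary : Mat)) =
    (hA.eigenvectorUnitary : Mat) * (X * Y) * star (hA.eigenvectorUnitary : Mat) := by
  have h : ((hA.eigenvectorUnitary : Mat) * X * star (hA.eigenvectorUnitary : Mat)) *
      ((hA.eigenvectorUnitary : Mat) * Y * star (hA.eigenvectorUnitary : Mat)) =
      (hA.eigenvectorUnitary : Mat) *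
        (X * ((star (hA.eigenvectorUnitary : Mat) * (hA.eigenvectorUnitary : Mat)) * Y)) *
        star (hA.eigenvectorUnitary : Mat) := by noncomm_ring
  rw [h, star_U_mul_U, one_mul]

lemma diag_comp (hA : A.IsHermitian) (f : ℝ → ℝ) :
    Matrix.diagonal (RCLike.ofReal ∘ f ∘ hA.eigenvalues) =
      Matrix.diagonal (fun i => ((f (hA.eigenvalues i) : ℝ) : ℂ)) := rfl

lemma cfc_def (hA : A.IsHermitian) (f : ℝ → ℝ) :
    hA.cfc f = (hA.eigenvectorUnitary : Mat) *
      Matrix.diagonal (RCLike.ofReal ∘ f ∘ hA.eigenvalues) *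
        star (hA.eigenvectorUnitary : Mat) := rfl

/-- The quadratic form of `hA.cfc f`. -/
lemma cfc_quad (hA : A.IsHermitian) (f : ℝ → ℝ) (v : Fin d → ℂ) :
    dotProduct (star v) ((hA.cfc f) *ᵥ v) =
      ((∑ i, f (hA.eigenvalues i) *
        Complex.normSq ((star (hA.eigenvectorUnitary : Mat) *ᵥ v) i) : ℝ) : ℂ) := by
  set U : Mat := (hA.eigenvectorUnitary : Mat) with hU
  set w : Fin d → ℂ := star U *ᵥ v with hw
  have hsw : star v ᵥ* U = star w := by
    rw [hw, star_mulVec, star_eq_conjTranspose, conjTranspose_conjTranspose]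
  rw [cfc_def, ← Matrix.mulVec_mulVec, ← Matrix.mulVec_mulVec,
    Matrix.dotProduct_mulVec (star v) U, hsw]
  have : ∀ i, (Matrix.diagonal (RCLike.ofReal ∘ f ∘ hA.eigenvalues) *ᵥ w) i
      = (f (hA.eigenvalues i) : ℂ) * w i := by
    intro i; rw [Matrix.mulVec_diagonal]; rfl
  rw [dotProduct]
  push_cast
  refine Finset.sum_congr rfl fun i _ => ?_
  rw [this i, Pi.star_apply]
  rw [show ((Complex.normSq (w i) : ℝ) : ℂ) = star (w i) * w i by
    rw [RCLike.star_def, mul_comm, Complex.mul_conj]]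
  ring

lemma cfc_herm (hA : A.IsHermitian) (f : ℝ → ℝ) : (hA.cfc f).IsHermitian := by
  rw [← hA.cfc_eq f]
  have h : IsSelfAdjoint (cfc f A) := cfc_predicate f A
  exact h

lemma cfc_psd (hA : A.IsHermitian) (f : ℝ → ℝ) (hf : ∀ i, 0 ≤ f (hA.eigenvalues i)) :
    (hA.cfc f).PosSemidef := by
  refine Matrix.PosSemidef.of_dotProduct_mulVec_nonneg (cfc_herm hA f) fun v => ?_
  rw [cfc_quad]
  rw [Complex.zero_le_real]
  exact Finset.sum_nonneg fun i _ => mul_nonneg (hf i) (Complex.normSq_nonneg _)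

lemma cfc_mul_cfc (hA : A.IsHermitian) (f g : ℝ → ℝ) :
    hA.cfc f * hA.cfc g = hA.cfc (fun x => f x * g x) := by
  simp only [cfc_def]
  rw [conj_mul_conj, diag_comp, diag_comp, diag_comp, diagonal_mul_diagonal]
  congr 1
  funext i
  push_cast
  ring

lemma cfc_congr_eig (hA : A.IsHermitian) {f g : ℝ → ℝ}
    (h : ∀ i, f (hA.eigenvalues i) = g (hA.eigenvalues i)) : hA.cfc f = hA.cfc g := by
  simp only [Matrix.IsHermitian.cfc, diag_comp]
  rw [show (fun i => ((f (hA.eigenvalues i) : ℝ) : ℂ)) = (fun i => ((g (hA.eigenvalues i) : ℝ) : ℂ))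
    from funext fun i => by rw [h i]]

lemma cfc_id' (hA : A.IsHermitian) : hA.cfc (fun x => x) = A := by
  rw [Matrix.IsHermitian.cfc]
  exact hA.spectral_theorem.symm

lemma cfc_one' (hA : A.IsHermitian) : hA.cfc (fun _ => 1) = 1 := by
  rw [cfc_def, diag_comp]
  have : Matrix.diagonal (fun _ : Fin d => ((1:ℝ) : ℂ)) = (1 : Mat) := by
    simp
  rw [this, mul_one, U_mul_star_U hA]

lemma cfc_sub' (hA : A.IsHermitian) (f g : ℝ → ℝ) :
    hA.cfc (fun x => f x - g x) = hA.cfc f - hA.cfc g := by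
  simp only [cfc_def, diag_comp]
  rw [← Matrix.sub_mul, ← Matrix.mul_sub, diagonal_sub,
    show (fun i => ((f (hA.eigenvalues i) - g (hA.eigenvalues i) : ℝ) : ℂ)) =
      (fun i => ((f (hA.eigenvalues i) : ℝ) : ℂ) - ((g (hA.eigenvalues i) : ℝ) : ℂ))
    from funext fun i => by push_cast; ring]

lemma cfc_add' (hA : A.IsHermitian) (f g : ℝ → ℝ) :
    hA.cfc (fun x => f x + g x) = hA.cfc f + hA.cfc g := by
  simp only [cfc_def, diag_comp]
  rw [← Matrix.add_mul, ← Matrix.mul_add, diagonal_add,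
    show (fun i => ((f (hA.eigenvalues i) + g (hA.eigenvalues i) : ℝ) : ℂ)) =
      (fun i => ((f (hA.eigenvalues i) : ℝ) : ℂ) + ((g (hA.eigenvalues i) : ℝ) : ℂ))
    from funext fun i => by push_cast; ring]

lemma cfc_real_smul (hA : A.IsHermitian) (c : ℝ) (f : ℝ → ℝ) :
    hA.cfc (fun x => c * f x) = (c : ℂ) • hA.cfc f := by
  simp only [cfc_def, diag_comp]
  rw [← smul_mul_assoc, ← mul_smul_comm, ← diagonal_smul,
    show (fun i => ((c * f (hA.eigenvalues i) : ℝ) : ℂ)) =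
      (c : ℂ) • (fun i => ((f (hA.eigenvalues i) : ℝ) : ℂ))
    from funext fun i => by push_cast; simp]

end BetaBound

namespace BetaBound

open Matrix MeasureTheory Set Complex

variable {d : ℕ} {A B X Y M : Matrix (Fin d) (Fin d) ℂ}

local notation "Mat" => Matrix (Fin d) (Fin d) ℂ

lemma trace_cfc (hA : A.IsHermitian) (f : ℝ → ℝ) :
    (hA.cfc f).trace = ((∑ i, f (hA.eigenvalues i) : ℝ) : ℂ) := by
  rw [cfc_def, Matrix.trace_mul_cycle, star_U_mul_U, one_mul,
    Matrix.trace_diagonal]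
  push_cast
  rfl

lemma psd_trace_re_nonneg (hM : M.PosSemidef) : 0 ≤ M.trace.re := by
  rw [← cfc_id' hM.1, trace_cfc, Complex.ofReal_re]
  exact Finset.sum_nonneg fun i _ => hM.eigenvalues_nonneg i

lemma pairing_nonneg (hX : X.PosSemidef) (hY : Y.PosSemidef) :
    0 ≤ ((X * Y).trace).re := by
  set R : Mat := hX.1.cfc Real.sqrt with hRdef
  have hRh : Rᴴ = R := cfc_herm hX.1 _
  have hSS : R * R = X := by
    rw [hRdef, cfc_mul_cfc, cfc_congr_eig hX.1 (g := fun x => x)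
      fun i => Real.mul_self_sqrt (hX.eigenvalues_nonneg i), cfc_id']
  have h1 : X * Y = R * (R * Y) := by rw [← mul_assoc, hSS]
  rw [h1, Matrix.trace_mul_comm]
  have h2 : (R * Y) * R = (R)ᴴ * Y * R := by
    rw [hRh, mul_assoc, ← mul_assoc]
  rw [h2]
  exact psd_trace_re_nonneg (hY.conjTranspose_mul_mul_same _)

lemma pairing_mono (hX : X.PosSemidef) {Y Y' : Mat} (h : (Y' - Y).PosSemidef) :
    ((X * Y).trace).re ≤ ((X * Y').trace).re := by
  have := pairing_nonneg hX h
  rw [Matrix.mul_sub, Matrix.trace_sub, Complex.sub_re] at this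
  linarith

lemma psd_real_smul {c : ℝ} (hc : 0 ≤ c) (hM : M.PosSemidef) : (c • M).PosSemidef := by
  refine Matrix.PosSemidef.of_dotProduct_mulVec_nonneg ?_ ?_
  · have hct : (c • M)ᴴ = c • Mᴴ := by
      rw [Matrix.conjTranspose_smul, star_trivial]
    rw [Matrix.IsHermitian, hct, hM.1]
  · intro v
    rw [Matrix.smul_mulVec, dotProduct_smul]
    have h0 := hM.dotProduct_mulVec_nonneg v
    rw [Complex.le_def] at h0 ⊢
    constructor
    · rw [Complex.smul_re, Complex.zero_re]
      exact mul_nonneg hc (by simpa using h0.1)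
    · rw [Complex.smul_im, Complex.zero_im]
      rw [Complex.zero_re, Complex.zero_im] at h0
      rw [← h0.2, smul_zero]

lemma dot_self_eq (w : Fin d → ℂ) :
    dotProduct (star w) w = ((∑ i, Complex.normSq (w i) : ℝ) : ℂ) := by
  rw [dotProduct]
  push_cast
  refine Finset.sum_congr rfl fun i _ => ?_
  rw [Pi.star_apply, RCLike.star_def, mul_comm, Complex.mul_conj]

lemma dot_self_pos {w : Fin d → ℂ} (hw : w ≠ 0) :
    0 < (dotProduct (star w) w).re := by
  rw [dot_self_eq, Complex.ofReal_re]
  obtain ⟨i, hi⟩ := Function.ne_iff.mp hw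
  exact Finset.sum_pos' (fun j _ => Complex.normSq_nonneg _)
    ⟨i, Finset.mem_univ i, by simpa using Complex.normSq_pos.mpr hi⟩

/-- Quadratic form of `hA.cfc f` at the `j`-th eigenvector column. -/
lemma cfc_quad_col (hA : A.IsHermitian) (f : ℝ → ℝ) (j : Fin d) :
    dotProduct (star (fun i => (hA.eigenvectorUnitary : Mat) i j))
      ((hA.cfc f) *ᵥ (fun i => (hA.eigenvectorUnitary : Mat) i j)) =
      ((f (hA.eigenvalues j) : ℝ) : ℂ) := by
  rw [cfc_quad]
  have hw : (star (hA.eigenvectorUnitary : Mat) *ᵥ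
      (fun i => (hA.eigenvectorUnitary : Mat) i j)) = fun i => (1 : Mat) i j := by
    funext i
    rw [← star_U_mul_U hA, Matrix.mul_apply]
    rfl
  rw [hw]
  have : ∀ i : Fin d, f (hA.eigenvalues i) * Complex.normSq ((1 : Mat) i j)
      = if i = j then f (hA.eigenvalues j) else 0 := by
    intro i
    by_cases h : i = j
    · subst h; simp [Matrix.one_apply]
    · simp [Matrix.one_apply, h]
  rw [Finset.sum_congr rfl fun i _ => this i]
  simp

lemma col_ne_zero (hA : A.IsHermitian) (j : Fin d) :
    (fun i => (hA.eigenvectorUnitary : Mat) i j) ≠ 0 := by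
  intro h0
  have := cfc_quad_col hA (fun _ => 1) j
  rw [cfc_one', h0] at this
  simp at this

lemma eig_le_one_of_psd (hM : M.IsHermitian) (h : ((1 : Mat) - M).PosSemidef) (j : Fin d) :
    hM.eigenvalues j ≤ 1 := by
  have hrw : (1 : Mat) - M = hM.cfc (fun x => 1 - x) := by
    rw [cfc_sub' hM (fun _ => 1) (fun x => x), cfc_one' hM, cfc_id' hM]
  have h2 := h.dotProduct_mulVec_nonneg (fun i => (hM.eigenvectorUnitary : Mat) i j)
  rw [hrw, cfc_quad_col hM (fun x => 1 - x) j, Complex.zero_le_real] at h2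
  linarith

lemma eig_pos_of_quad_pos (hM : M.IsHermitian)
    (h : ∀ v : Fin d → ℂ, v ≠ 0 → 0 < (dotProduct (star v) (M *ᵥ v)).re)
    (j : Fin d) : 0 < hM.eigenvalues j := by
  have h2 := h _ (col_ne_zero hM j)
  have h3 := cfc_quad_col hM (fun x => x) j
  rw [cfc_id' hM] at h3
  rw [h3, Complex.ofReal_re] at h2
  exact h2

end BetaBound

namespace BetaBound

open Matrix MeasureTheory Set Complex

variable {d : ℕ} {A B X Y M : Matrix (Fin d) (Fin d) ℂ}

local notation "Mat" => Matrix (Fin d) (Fin d) ℂ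

lemma cfc_const (hA : A.IsHermitian) (c : ℝ) : hA.cfc (fun _ => c) = (c : ℂ) • 1 := by
  have h := cfc_real_smul hA c (fun _ => 1)
  rw [cfc_one' hA] at h
  simpa using h

lemma mPow_eq_cfc (hA : A.IsHermitian) {s : ℝ} (hs : s ≠ 0) :
    mPow A s = hA.cfc (fun x => x ^ s) := by
  rw [mPow, dif_pos hA, cfc_def, diag_comp,
    show (fun i => (((if hA.eigenvalues i = 0 then 0 else hA.eigenvalues i ^ s) : ℝ) : ℂ))
      = (fun i => ((hA.eigenvalues i ^ s : ℝ) : ℂ)) from funext fun i => by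
        split_ifs with h
        · rw [h, Real.zero_rpow hs]
        · rfl]

lemma mPow_psd (hX : X.PosSemidef) {s : ℝ} (hs : s ≠ 0) : (mPow X s).PosSemidef := by
  rw [mPow_eq_cfc hX.1 hs]
  exact cfc_psd _ _ fun i => Real.rpow_nonneg (hX.eigenvalues_nonneg i) s

lemma mPow_mul_mPow (hX : X.PosSemidef) {s : ℝ} (hs : s ∈ Set.Ioo (0:ℝ) 1) :
    mPow X s * mPow X (1 - s) = X := by
  rw [mPow_eq_cfc hX.1 hs.1.ne', mPow_eq_cfc hX.1 (by intro h; have := hs.2; linarith [sub_eq_zero.mp h] : (1:ℝ) - s ≠ 0),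
    cfc_mul_cfc]
  rw [cfc_congr_eig hX.1 (g := fun x => x) fun i => ?_, cfc_id' hX.1]
  rcases (hX.eigenvalues_nonneg i).eq_or_lt with h | h
  · rw [← h, Real.zero_rpow hs.1.ne', zero_mul]
  · rw [← Real.rpow_add h, add_sub_cancel, Real.rpow_one]

lemma inv_unique {a b c : Mat} (hab : a * b = 1) (hca : c * a = 1) : b = c := by
  calc b = 1 * b := (one_mul b).symm
  _ = c * a * b := by rw [hca]
  _ = c * (a * b) := by rw [mul_assoc]
  _ = c := by rw [hab, mul_one]

lemma cancel_mid {P Q : Mat} (h : P * Q = 1) (Z : Mat) : P * (Q * Z) = Z := by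
  rw [← mul_assoc, h, one_mul]

lemma resolvent_antitone (hX : X.PosSemidef) (hY : Y.PosSemidef)
    (hXY : (Y - X).PosSemidef) {μ : ℝ} (hμ : 0 < μ) :
    (hX.1.cfc (fun x => (x + μ)⁻¹) - hY.1.cfc (fun x => (x + μ)⁻¹)).PosSemidef := by
  set S : Mat := hY.1.cfc (fun x => Real.sqrt (x + μ)) with hSdef
  set Si : Mat := hY.1.cfc (fun x => (Real.sqrt (x + μ))⁻¹) with hSidef
  have hsqrt_pos : ∀ i, 0 < Real.sqrt (hY.1.eigenvalues i + μ) := fun i =>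
    Real.sqrt_pos.mpr (by linarith [hY.eigenvalues_nonneg i])
  have hXpos : ∀ i, 0 < hX.1.eigenvalues i + μ := fun i => by
    linarith [hX.eigenvalues_nonneg i]
  have hYpos : ∀ i, 0 < hY.1.eigenvalues i + μ := fun i => by
    linarith [hY.eigenvalues_nonneg i]
  have hSSi : S * Si = 1 := by
    rw [hSdef, hSidef, cfc_mul_cfc,
      cfc_congr_eig hY.1 (g := fun _ => 1) fun i => mul_inv_cancel₀ (hsqrt_pos i).ne',
      cfc_one' hY.1]
  have hSiS : Si * S = 1 := by
    rw [hSdef, hSidef, cfc_mul_cfc,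
      cfc_congr_eig hY.1 (g := fun _ => 1) fun i => inv_mul_cancel₀ (hsqrt_pos i).ne',
      cfc_one' hY.1]
  have hSh : Sᴴ = S := cfc_herm hY.1 _
  have hSih : Siᴴ = Si := cfc_herm hY.1 _
  have hXμ_eq : hX.1.cfc (fun x => x + μ) = X + (μ:ℂ) • 1 := by
    rw [cfc_add' hX.1 (fun x => x) (fun _ => μ), cfc_id' hX.1, cfc_const hX.1 μ]
  have hS2 : S * S = hY.1.cfc (fun x => x + μ) := by
    rw [hSdef, cfc_mul_cfc]
    exact cfc_congr_eig hY.1 fun i => Real.mul_self_sqrt (hYpos i).le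
  set Xμ : Mat := hX.1.cfc (fun x => x + μ) with hXμdef
  set M2 : Mat := Si * Xμ * Si with hM2def
  have hXμpsd : Xμ.PosSemidef := cfc_psd _ _ fun i => (hXpos i).le
  have hM2psd : M2.PosSemidef := by
    have h := hXμpsd.mul_mul_conjTranspose_same Si
    rwa [hSih] at h
  have hM2h : M2.IsHermitian := hM2psd.1
  -- 1 - M2 is PSD
  have hmid : Si * (hY.1.cfc (fun x => x + μ)) * Si = 1 := by
    rw [← hS2, show Si * (S * S) * Si = (Si * S) * (S * Si) by noncomm_ring, hSiS, hSSi,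
      one_mul]
  have hYμ_eq : hY.1.cfc (fun x => x + μ) = Y + (μ:ℂ) • 1 := by
    rw [cfc_add' hY.1 (fun x => x) (fun _ => μ), cfc_id' hY.1, cfc_const hY.1 μ]
  have h1mM2 : (1 : Mat) - M2 = Si * (Y - X) * Si := by
    rw [← hmid, hM2def, hXμ_eq, hYμ_eq]
    noncomm_ring
  have h1mM2psd : ((1 : Mat) - M2).PosSemidef := by
    rw [h1mM2]
    have h := hXY.mul_mul_conjTranspose_same Si
    rwa [hSih] at h
  have heig_le : ∀ j, hM2h.eigenvalues j ≤ 1 := eig_le_one_of_psd hM2h h1mM2psd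
  -- eigenvalues of M2 are positive
  have heig_pos : ∀ j, 0 < hM2h.eigenvalues j := by
    refine eig_pos_of_quad_pos hM2h fun v hv => ?_
    have hw : ∀ y : Fin d → ℂ, dotProduct (star v) (Si *ᵥ y)
        = dotProduct (star (Si *ᵥ v)) y := by
      intro y
      rw [Matrix.dotProduct_mulVec, star_mulVec, hSih]
    have hvec : M2 *ᵥ v = Si *ᵥ (Xμ *ᵥ (Si *ᵥ v)) := by
      rw [hM2def, ← Matrix.mulVec_mulVec, ← Matrix.mulVec_mulVec]
    set w : Fin d → ℂ := Si *ᵥ v with hwdef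
    have hwne : w ≠ 0 := by
      intro h0
      apply hv
      have : v = S *ᵥ w := by
        rw [hwdef, Matrix.mulVec_mulVec, hSSi, Matrix.one_mulVec]
      rw [this, h0, Matrix.mulVec_zero]
    rw [hvec, hw]
    rw [hXμ_eq, Matrix.add_mulVec, dotProduct_add, Matrix.smul_mulVec,
      Matrix.one_mulVec, dotProduct_smul, Complex.add_re, smul_eq_mul,
      Complex.re_ofReal_mul]
    have h1 : 0 ≤ (dotProduct (star w) (X *ᵥ w)).re := by
      have := hX.dotProduct_mulVec_nonneg w
      rw [Complex.le_def] at this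
      simpa using this.1
    have h2 : 0 < (dotProduct (star w) w).re := dot_self_pos hwne
    nlinarith
  set Minv : Mat := hM2h.cfc (fun x => x⁻¹) with hMinvdef
  have hMinvM2 : Minv * M2 = 1 := by
    conv_lhs => rw [← cfc_id' hM2h]
    rw [hMinvdef, cfc_mul_cfc,
      cfc_congr_eig hM2h (g := fun _ => 1) fun i => inv_mul_cancel₀ (heig_pos i).ne',
      cfc_one' hM2h]
  have hMinv1psd : (Minv - 1).PosSemidef := by
    have : Minv - 1 = hM2h.cfc (fun x => x⁻¹ - 1) := by
      rw [cfc_sub' hM2h (fun x => x⁻¹) (fun _ => 1), cfc_one' hM2h, hMinvdef]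
    rw [this]
    refine cfc_psd _ _ fun i => ?_
    have h1 := heig_pos i
    have h2 := heig_le i
    have h3 : 0 < (hM2h.eigenvalues i)⁻¹ := inv_pos.mpr h1
    nlinarith [mul_inv_cancel₀ h1.ne']
  -- Xμ = S * M2 * S
  have hXμ_SMS : Xμ = S * M2 * S := by
    rw [hM2def, show S * (Si * Xμ * Si) * S = (S * Si) * Xμ * (Si * S) by noncomm_ring,
      hSSi, hSiS, one_mul, mul_one]
  -- XμInv is a two-sided inverse of Xμ
  have hXμInv_right : Xμ * hX.1.cfc (fun x => (x + μ)⁻¹) = 1 := by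
    rw [hXμdef, cfc_mul_cfc,
      cfc_congr_eig hX.1 (g := fun _ => 1) fun i => mul_inv_cancel₀ (hXpos i).ne',
      cfc_one' hX.1]
  have hc : (Si * Minv * Si) * Xμ = 1 := by
    rw [hXμ_SMS]
    calc (Si * Minv * Si) * (S * M2 * S) = Si * Minv * (Si * S) * M2 * S := by noncomm_ring
    _ = Si * (Minv * M2) * S := by rw [hSiS]; noncomm_ring
    _ = Si * S := by rw [hMinvM2]; noncomm_ring
    _ = 1 := hSiS
  have hXμInv_eq : hX.1.cfc (fun x => (x + μ)⁻¹) = Si * Minv * Si :=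
    inv_unique hXμInv_right hc
  have hYμInv_right : hY.1.cfc (fun x => x + μ) * hY.1.cfc (fun x => (x + μ)⁻¹) = 1 := by
    rw [cfc_mul_cfc,
      cfc_congr_eig hY.1 (g := fun _ => 1) fun i => mul_inv_cancel₀ (hYpos i).ne',
      cfc_one' hY.1]
  have hc' : (Si * Si) * hY.1.cfc (fun x => x + μ) = 1 := by
    rw [← hS2]
    calc (Si * Si) * (S * S) = Si * ((Si * S) * S) := by noncomm_ring
    _ = 1 := by conv_lhs => rw [hSiS, one_mul, hSiS]
  have hYμInv_eq : hY.1.cfc (fun x => (x + μ)⁻¹) = Si * Si :=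
    inv_unique hYμInv_right hc'
  rw [hXμInv_eq, hYμInv_eq,
    show Si * Minv * Si - Si * Si = Si * (Minv - 1) * Si by noncomm_ring]
  have h := hMinv1psd.mul_mul_conjTranspose_same Si
  rwa [hSih] at h

end BetaBound

namespace BetaBound

open Matrix MeasureTheory Set Complex

variable {d : ℕ} {A B X Y M : Matrix (Fin d) (Fin d) ℂ}

local notation "Mat" => Matrix (Fin d) (Fin d) ℂ

lemma int_term {s : ℝ} (hs : s ∈ Set.Ioo (0:ℝ) 1) {x : ℝ} (hx : 0 ≤ x) :
    IntegrableOn (fun μ : ℝ => μ ^ (s-1) * (x / (x + μ))) (Ioi (0:ℝ)) := by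
  have hIoi : Ioi (0:ℝ) = Ioc 0 1 ∪ Ioi 1 := (Set.Ioc_union_Ioi_eq_Ioi zero_le_one).symm
  rw [hIoi]
  apply IntegrableOn.union
  · have hint : IntegrableOn (fun μ : ℝ => μ ^ (s-1)) (Ioc (0:ℝ) 1) := by
      have h := intervalIntegral.intervalIntegrable_rpow'
        (a := 0) (b := 1) (by linarith [hs.1] : (-1:ℝ) < s - 1)
      rwa [intervalIntegrable_iff_integrableOn_Ioc_of_le zero_le_one] at h
    refine Integrable.mono' hint ?_ ?_
    · refine ContinuousOn.aestronglyMeasurable (fun μ hμ => ?_) measurableSet_Ioc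
      have hμ0 : 0 < μ := hμ.1
      exact ((Real.continuousAt_rpow_const μ (s-1) (Or.inl hμ0.ne')).continuousWithinAt.mul
        (continuousWithinAt_const.div
          ((continuous_const.add continuous_id).continuousWithinAt)
          (by positivity)))
    · filter_upwards [ae_restrict_mem measurableSet_Ioc] with μ hμ
      have hμ0 : 0 < μ := hμ.1
      rw [Real.norm_eq_abs, _root_.abs_of_nonneg (by positivity)]
      have hr : (0:ℝ) ≤ μ ^ (s-1) := by positivity
      have h1 : x / (x + μ) ≤ 1 := div_le_one_of_le₀ (by linarith) (by positivity)
      have h0 : (0:ℝ) ≤ x / (x + μ) := div_nonneg hx (by positivity)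
      nlinarith
  · have hint : IntegrableOn (fun μ : ℝ => x * μ ^ (s-2)) (Ioi (1:ℝ)) :=
      (integrableOn_Ioi_rpow_of_lt (by linarith [hs.2]) one_pos).const_mul x
    refine Integrable.mono' hint ?_ ?_
    · refine ContinuousOn.aestronglyMeasurable (fun μ hμ => ?_) measurableSet_Ioi
      have hμ0 : 0 < μ := lt_trans one_pos hμ
      exact ((Real.continuousAt_rpow_const μ (s-1) (Or.inl hμ0.ne')).continuousWithinAt.mul
        (continuousWithinAt_const.div
          ((continuous_const.add continuous_id).continuousWithinAt)
          (by positivity)))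
    · filter_upwards [ae_restrict_mem measurableSet_Ioi] with μ hμ
      have hμ0 : 0 < μ := lt_trans one_pos hμ
      rw [Real.norm_eq_abs, _root_.abs_of_nonneg (by positivity)]
      have h2 : x / (x + μ) ≤ x / μ := by gcongr; linarith
      have hr : (0:ℝ) ≤ μ ^ (s-1) := by positivity
      calc μ ^ (s-1) * (x / (x + μ)) ≤ μ ^ (s-1) * (x / μ) := by
            exact mul_le_mul_of_nonneg_left h2 hr
      _ = x * μ ^ (s-2) := by
            rw [show s - 2 = (s-1) + (-1) by ring, Real.rpow_add hμ0, Real.rpow_neg_one,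
              div_eq_mul_inv]
            ring

lemma rpow_rep {s : ℝ} (hs : s ∈ Set.Ioo (0:ℝ) 1) {x : ℝ} (hx : 0 ≤ x) :
    ∫ μ in Ioi (0:ℝ), μ ^ (s-1) * (x / (x + μ))
      = x ^ s * ∫ μ in Ioi (0:ℝ), μ ^ (s-1) * (1 / (1 + μ)) := by
  rcases hx.eq_or_lt with h | h
  · rw [← h, Real.zero_rpow hs.1.ne', zero_mul]
    have : ∀ μ : ℝ, μ ^ (s-1) * ((0:ℝ) / (0 + μ)) = 0 := fun μ => by
      rw [zero_div, mul_zero]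
    simp only [this]
    exact integral_zero _ _
  · have h1 := MeasureTheory.integral_comp_mul_left_Ioi
      (fun μ => μ ^ (s-1) * (x / (x + μ))) 0 h
    rw [mul_zero] at h1
    have h2 : EqOn (fun μ : ℝ => (fun ν : ℝ => ν ^ (s-1) * (x / (x + ν))) (x * μ))
        (fun μ : ℝ => x ^ (s-1) * (μ ^ (s-1) * (1 / (1 + μ)))) (Ioi 0) := by
      intro μ hμ
      have hμ0 : (0:ℝ) < μ := hμ
      simp only
      rw [Real.mul_rpow h.le hμ0.le,
        show x + x * μ = x * (1 + μ) by ring, div_mul_eq_div_div, div_self h.ne']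
      ring
    rw [setIntegral_congr_fun measurableSet_Ioi h2, MeasureTheory.integral_const_mul] at h1
    have h1' : x ^ (s-1) * (∫ μ in Ioi (0:ℝ), μ ^ (s-1) * (1/(1+μ)))
        = x⁻¹ * ∫ μ in Ioi (0:ℝ), μ ^ (s-1) * (x/(x+μ)) := by simpa using h1
    have h4 : x * x ^ (s-1) = x ^ s := by
      nth_rewrite 1 [← Real.rpow_one x]
      rw [← Real.rpow_add h]
      norm_num
    rw [← h4, mul_assoc, h1', ← mul_assoc, mul_inv_cancel₀ h.ne', one_mul]

end BetaBound

namespace BetaBound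

open Matrix MeasureTheory Set Complex

variable {d : ℕ} {A B X Y M : Matrix (Fin d) (Fin d) ℂ}

local notation "Mat" => Matrix (Fin d) (Fin d) ℂ

lemma Ipos {s : ℝ} (hs : s ∈ Set.Ioo (0:ℝ) 1) :
    0 < ∫ μ in Ioi (0:ℝ), μ ^ (s-1) * (1 / (1 + μ)) := by
  rw [setIntegral_pos_iff_support_of_nonneg_ae ?_ ?_]
  · have hsub : Ioi (0:ℝ) ⊆ Function.support (fun μ : ℝ => μ ^ (s-1) * (1 / (1 + μ))) := by
      intro μ hμ
      have hμ0 : (0:ℝ) < μ := hμ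
      have : (0:ℝ) < μ ^ (s-1) * (1 / (1 + μ)) := by positivity
      exact this.ne'
    rw [Set.inter_eq_self_of_subset_right hsub, Real.volume_Ioi]
    exact ENNReal.zero_lt_top
  · filter_upwards [ae_restrict_mem measurableSet_Ioi] with μ hμ
    have hμ0 : (0:ℝ) < μ := hμ
    positivity
  · have := int_term hs (zero_le_one (α := ℝ))
    simpa using this

lemma ofReal_smul_eq (c : ℝ) (M : Mat) : (c : ℂ) • M = c • M := by
  ext i j
  simp [Matrix.smul_apply, Complex.real_smul]

/-- Löwner–Heinz for exponents in (0,1). -/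
lemma mPow_mono (hX : X.PosSemidef) (hY : Y.PosSemidef) (hXY : (Y - X).PosSemidef)
    {s : ℝ} (hs : s ∈ Set.Ioo (0:ℝ) 1) : (mPow Y s - mPow X s).PosSemidef := by
  have hXs := mPow_psd hX hs.1.ne'
  have hYs := mPow_psd hY hs.1.ne'
  refine Matrix.PosSemidef.of_dotProduct_mulVec_nonneg (hYs.1.sub hXs.1) fun v => ?_
  rw [Matrix.sub_mulVec, dotProduct_sub, mPow_eq_cfc hX.1 hs.1.ne',
    mPow_eq_cfc hY.1 hs.1.ne', cfc_quad, cfc_quad, ← Complex.ofReal_sub,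
    Complex.zero_le_real, sub_nonneg]
  set pX : Fin d → ℝ := fun i =>
    Complex.normSq ((star (hX.1.eigenvectorUnitary : Mat) *ᵥ v) i) with hpX
  set pY : Fin d → ℝ := fun i =>
    Complex.normSq ((star (hY.1.eigenvectorUnitary : Mat) *ᵥ v) i) with hpY
  set xs : Fin d → ℝ := hX.1.eigenvalues with hxs
  set ys : Fin d → ℝ := hY.1.eigenvalues with hys
  -- reduce to integral comparison
  set I : ℝ := ∫ μ in Ioi (0:ℝ), μ ^ (s-1) * (1 / (1 + μ)) with hI
  have hIpos : 0 < I := Ipos hs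
  have hrepX : (∑ i, xs i ^ s * pX i) * I
      = ∫ μ in Ioi (0:ℝ), ∑ i, pX i * (μ ^ (s-1) * (xs i / (xs i + μ))) := by
    rw [MeasureTheory.integral_finset_sum _ fun i _ =>
      (int_term hs (hX.eigenvalues_nonneg i)).const_mul (pX i), Finset.sum_mul]
    refine Finset.sum_congr rfl fun i _ => ?_
    rw [MeasureTheory.integral_const_mul, rpow_rep hs (hX.eigenvalues_nonneg i)]
    ring
  have hrepY : (∑ i, ys i ^ s * pY i) * I
      = ∫ μ in Ioi (0:ℝ), ∑ i, pY i * (μ ^ (s-1) * (ys i / (ys i + μ))) := by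
    rw [MeasureTheory.integral_finset_sum _ fun i _ =>
      (int_term hs (hY.eigenvalues_nonneg i)).const_mul (pY i), Finset.sum_mul]
    refine Finset.sum_congr rfl fun i _ => ?_
    rw [MeasureTheory.integral_const_mul, rpow_rep hs (hY.eigenvalues_nonneg i)]
    ring
  have hmono : ∀ μ : ℝ, 0 < μ →
      ∑ i, pX i * (xs i / (xs i + μ)) ≤ ∑ i, pY i * (ys i / (ys i + μ)) := by
    intro μ hμ
    have hfrac : ∀ (Z : Mat) (hZ : Z.PosSemidef),
        hZ.1.cfc (fun x => x / (x + μ)) = 1 - (μ:ℂ) • hZ.1.cfc (fun x => (x + μ)⁻¹) := by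
      intro Z hZ
      rw [cfc_congr_eig hZ.1 (g := fun x => 1 - μ * (x + μ)⁻¹) fun i => ?_,
        cfc_sub' hZ.1 (fun _ => 1) (fun x => μ * (x + μ)⁻¹), cfc_one' hZ.1,
        cfc_real_smul hZ.1 μ (fun x => (x + μ)⁻¹)]
      have hpos : 0 < hZ.1.eigenvalues i + μ := by linarith [hZ.eigenvalues_nonneg i]
      field_simp
      ring
    have hdiff : (hY.1.cfc (fun x => x / (x + μ)) - hX.1.cfc (fun x => x / (x + μ))).PosSemidef := by
      rw [hfrac X hX, hfrac Y hY,
        show (1 : Mat) - (μ:ℂ) • hY.1.cfc (fun x => (x + μ)⁻¹)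
            - ((1 : Mat) - (μ:ℂ) • hX.1.cfc (fun x => (x + μ)⁻¹))
          = (μ:ℂ) • (hX.1.cfc (fun x => (x + μ)⁻¹) - hY.1.cfc (fun x => (x + μ)⁻¹)) by
          rw [smul_sub]; abel, ofReal_smul_eq]
      exact psd_real_smul hμ.le (resolvent_antitone hX hY hXY hμ)
    have h0 := hdiff.dotProduct_mulVec_nonneg v
    rw [Matrix.sub_mulVec, dotProduct_sub, cfc_quad, cfc_quad, ← Complex.ofReal_sub,
      Complex.zero_le_real, sub_nonneg] at h0
    calc ∑ i, pX i * (xs i / (xs i + μ))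
        = ∑ i, (fun x => x / (x + μ)) (hX.1.eigenvalues i) *
            Complex.normSq ((star (hX.1.eigenvectorUnitary : Mat) *ᵥ v) i) := by
          refine Finset.sum_congr rfl fun i _ => ?_; rw [hpX, hxs]; ring
      _ ≤ ∑ i, (fun x => x / (x + μ)) (hY.1.eigenvalues i) *
            Complex.normSq ((star (hY.1.eigenvectorUnitary : Mat) *ᵥ v) i) := h0
      _ = ∑ i, pY i * (ys i / (ys i + μ)) := by
          refine Finset.sum_congr rfl fun i _ => ?_; rw [hpY, hys]; ring
  have hint : (∑ i, xs i ^ s * pX i) * I ≤ (∑ i, ys i ^ s * pY i) * I := by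
    rw [hrepX, hrepY]
    refine setIntegral_mono_on
      (MeasureTheory.integrable_finset_sum _ fun i _ =>
        (int_term hs (hX.eigenvalues_nonneg i)).const_mul (pX i))
      (MeasureTheory.integrable_finset_sum _ fun i _ =>
        (int_term hs (hY.eigenvalues_nonneg i)).const_mul (pY i))
      measurableSet_Ioi (fun μ hμ => ?_)
    have hμ0 : (0:ℝ) < μ := hμ
    have h1 : ∀ (p q : Fin d → ℝ), ∑ i, p i * (μ ^ (s-1) * (q i / (q i + μ)))
        = μ ^ (s-1) * ∑ i, p i * (q i / (q i + μ)) := by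
      intro p q
      rw [Finset.mul_sum]
      exact Finset.sum_congr rfl fun i _ => by ring
    rw [h1, h1]
    exact mul_le_mul_of_nonneg_left (hmono μ hμ0) (by positivity)
  exact le_of_mul_le_mul_right hint hIpos
end BetaBound

namespace BetaBound

open Matrix MeasureTheory Set Complex

variable {d : ℕ} {A B X Y M : Matrix (Fin d) (Fin d) ℂ}

local notation "Mat" => Matrix (Fin d) (Fin d) ℂ

lemma audenaert_test (hA : A.PosSemidef) (hB : B.PosSemidef) {s : ℝ}
    (hs : s ∈ Set.Ioo (0:ℝ) 1) :
    ∃ T : Mat, T.PosSemidef ∧ ((1:Mat) - T).PosSemidef ∧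
      ((A * ((1:Mat) - T)).trace).re + ((B * T).trace).re
        ≤ ((mPow A s * mPow B (1 - s)).trace).re := by
  have hs' : (1 - s) ∈ Set.Ioo (0:ℝ) 1 := ⟨by linarith [hs.2], by linarith [hs.1]⟩
  have hH : (A - B).IsHermitian := hA.1.sub hB.1
  set T : Mat := hH.cfc (fun x => if 0 < x then 1 else 0) with hT
  have hTpsd : T.PosSemidef := cfc_psd _ _ fun i => by split_ifs <;> norm_num
  have h1Tpsd : ((1:Mat) - T).PosSemidef := by
    rw [show (1:Mat) - T = hH.cfc (fun x => 1 - if 0 < x then 1 else 0) by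
      rw [cfc_sub' hH (fun _ => 1) (fun x => if 0 < x then 1 else 0), cfc_one' hH, hT]]
    exact cfc_psd _ _ fun i => by split_ifs <;> norm_num
  set Dp : Mat := hH.cfc (fun x => max x 0) with hDp
  set Dm : Mat := hH.cfc (fun x => max (-x) 0) with hDm
  have hDppsd : Dp.PosSemidef := cfc_psd _ _ fun i => le_max_right _ _
  have hHT : (A - B) * T = Dp := by
    conv_lhs => rw [← cfc_id' hH]
    rw [hT, cfc_mul_cfc, hDp]
    refine cfc_congr_eig hH fun i => ?_
    rcases lt_or_ge 0 (hH.eigenvalues i) with h | h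
    · rw [if_pos h, mul_one, max_eq_left h.le]
    · rw [if_neg (not_lt.mpr h), mul_zero, max_eq_right h]
  set C : Mat := B + Dp with hC
  have hCpsd : C.PosSemidef := hB.add hDppsd
  have hCA : (C - A).PosSemidef := by
    have h2 : C - A = Dp - (A - B) := by rw [hC]; abel
    have h3 : Dp - (A - B) = hH.cfc (fun x => max x 0 - x) := by
      rw [cfc_sub' hH (fun x => max x 0) (fun x => x), cfc_id' hH, hDp]
    rw [h2, h3]
    refine cfc_psd _ _ fun i => ?_
    rcases le_or_gt 0 (hH.eigenvalues i) with h | h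
    · rw [max_eq_left h]; simp
    · rw [max_eq_right h.le]; linarith
  have hCB : C - B = Dp := add_sub_cancel_left B Dp
  have L1 := mPow_mono hA hCpsd hCA hs
  have L2 := mPow_mono hB hCpsd (hCB ▸ hDppsd) hs'
  have L3 := mPow_mono hB hCpsd (hCB ▸ hDppsd) hs
  have L4 := mPow_mono hA hCpsd hCA hs'
  have hexp : ∀ P Q R : Mat, (((P - Q) * R).trace).re
      = ((P * R).trace).re - ((Q * R).trace).re := fun P Q R => by
    rw [Matrix.sub_mul, Matrix.trace_sub, Complex.sub_re]
  have step1 : (((mPow C s - mPow A s) * mPow B (1-s)).trace).re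
      ≤ (((mPow C s - mPow A s) * mPow C (1-s)).trace).re := pairing_mono L1 L2
  have step2 : ((mPow A s * mPow A (1-s)).trace).re
      ≤ ((mPow A s * mPow C (1-s)).trace).re := pairing_mono (mPow_psd hA hs.1.ne') L4
  have step3 : ((mPow B (1-s) * mPow B s).trace).re
      ≤ ((mPow B (1-s) * mPow C s).trace).re := pairing_mono (mPow_psd hB hs'.1.ne') L3
  rw [hexp, hexp] at step1
  have hAA : mPow A s * mPow A (1-s) = A := mPow_mul_mPow hA hs
  have hCC : mPow C s * mPow C (1-s) = C := mPow_mul_mPow hCpsd hs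
  have hBB : mPow B (1-s) * mPow B s = B := by
    have := mPow_mul_mPow hB hs'
    rwa [sub_sub_cancel] at this
  rw [hAA] at step2
  rw [hBB, Matrix.trace_mul_comm] at step3
  rw [hCC] at step1
  -- trace identities
  have e1 : ((A * ((1:Mat) - T)).trace).re = A.trace.re - ((A * T).trace).re := by
    rw [Matrix.mul_sub, mul_one, Matrix.trace_sub, Complex.sub_re]
  have e2 : ((A * T).trace).re - ((B * T).trace).re = Dp.trace.re := by
    rw [← Complex.sub_re, ← Matrix.trace_sub, ← Matrix.sub_mul, hHT]
  have e3 : C.trace.re = B.trace.re + Dp.trace.re := by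
    rw [hC, Matrix.trace_add, Complex.add_re]
  refine ⟨T, hTpsd, h1Tpsd, ?_⟩
  linarith

end BetaBound

namespace BetaBound

open Matrix MeasureTheory Set Complex

variable {d : ℕ} {A B X Y M ρ σ : Matrix (Fin d) (Fin d) ℂ}

local notation "Mat" => Matrix (Fin d) (Fin d) ℂ

lemma smul_herm (hσ : σ.IsHermitian) (γ : ℝ) : (γ • σ).IsHermitian := by
  have hct : (γ • σ)ᴴ = γ • σᴴ := by
    rw [Matrix.conjTranspose_smul, star_trivial]
  rw [Matrix.IsHermitian, hct, hσ]

lemma mPow_real_smul (hσ : σ.PosSemidef) {γ t : ℝ} (hγ : 0 < γ) (ht : t ∈ Set.Ioo (0:ℝ) 1) :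
    mPow (γ • σ) t = γ ^ t • mPow σ t := by
  have hself : IsSelfAdjoint σ := hσ.1
  rw [mPow_eq_cfc (smul_herm hσ.1 γ) ht.1.ne', ← Matrix.IsHermitian.cfc_eq,
    mPow_eq_cfc hσ.1 ht.1.ne', ← Matrix.IsHermitian.cfc_eq]
  rw [← cfc_comp_smul γ (fun x : ℝ => x ^ t) σ
    ((Matrix.finite_real_spectrum.image _).continuousOn _) hself]
  rw [cfc_congr (g := fun x : ℝ => γ ^ t * x ^ t) ?_]
  · exact cfc_const_mul (γ ^ t) (fun x : ℝ => x ^ t) σ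
      (Matrix.finite_real_spectrum.continuousOn _)
  · intro x hx
    rw [hσ.1.spectrum_real_eq_range_eigenvalues] at hx
    obtain ⟨i, rfl⟩ := hx
    simp only [smul_eq_mul]
    exact Real.mul_rpow hγ.le (hσ.eigenvalues_nonneg i)

lemma audenaert_scaled (hρ : ρ.PosSemidef) (hσ : σ.PosSemidef) {α γ : ℝ}
    (hα : α ∈ Set.Ioo (0:ℝ) 1) (hγ : 0 < γ) :
    ∃ T : Mat, T.PosSemidef ∧ ((1:Mat) - T).PosSemidef ∧
      ((ρ * ((1:Mat) - T)).trace).re + γ * ((σ * T).trace).re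
        ≤ γ ^ (1-α) * ((mPow ρ α * mPow σ (1-α)).trace).re := by
  have hσγ : (γ • σ).PosSemidef := by
    have h := psd_real_smul hγ.le hσ
    exact h
  obtain ⟨T, h1, h2, h3⟩ := audenaert_test hρ hσγ hα
  refine ⟨T, h1, h2, ?_⟩
  have e1 : (((γ • σ) * T).trace).re = γ * ((σ * T).trace).re := by
    rw [smul_mul_assoc, Matrix.trace_smul, Complex.real_smul, Complex.re_ofReal_mul]
  have e2 : ((mPow ρ α * mPow (γ • σ) (1-α)).trace).re
      = γ ^ (1-α) * ((mPow ρ α * mPow σ (1-α)).trace).re := by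
    rw [mPow_real_smul hσ hγ ⟨by linarith [hα.2], by linarith [hα.1]⟩, mul_smul_comm,
      Matrix.trace_smul, Complex.real_smul, Complex.re_ofReal_mul]
  rw [e1, e2] at h3
  exact h3

end BetaBound

namespace BetaBound

open Matrix MeasureTheory Set Complex

lemma key_scalar {Q e a : ℝ} (hQ : 0 < Q) (he : 0 < e) (ha : a ∈ Set.Ioo (0:ℝ) 1) :
    ∀ γ : ℝ, 0 < γ → γ ^ (1-a) * Q ≤ e + γ * Real.exp (
      -((a-1)⁻¹ * Real.log Q) + a/(1-a) * Real.log e⁻¹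
      - (-(a * Real.log a) - (1-a) * Real.log (1-a))/(1-a)) := by
  intro γ hγ
  have h1a : 0 < 1 - a := by linarith [ha.2]
  have ha0 := ha.1
  set B : ℝ := Real.exp (-((a-1)⁻¹ * Real.log Q) + a/(1-a) * Real.log e⁻¹
      - (-(a * Real.log a) - (1-a) * Real.log (1-a))/(1-a)) with hB
  have hBpos : 0 < B := Real.exp_pos _
  have hgm : (e/a)^a * ((γ*B)/(1-a))^(1-a) ≤ a * (e/a) + (1-a) * ((γ*B)/(1-a)) :=
    Real.geom_mean_le_arith_mean2_weighted ha0.le h1a.le (by positivity) (by positivity)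
      (by ring)
  have hL : (e/a)^a * ((γ*B)/(1-a))^(1-a) = γ^(1-a) * Q := by
    rw [Real.rpow_def_of_pos (by positivity), Real.rpow_def_of_pos (by positivity),
      Real.rpow_def_of_pos hγ]
    conv_rhs => rw [← Real.exp_log hQ]
    rw [← Real.exp_add, ← Real.exp_add]
    congr 1
    rw [Real.log_div he.ne' ha0.ne', Real.log_div (by positivity) h1a.ne',
      Real.log_mul hγ.ne' hBpos.ne', hB, Real.log_exp, Real.log_inv]
    have ha1 : a - 1 ≠ 0 := by linarith [ha.2]
    field_simp
    ring
  have hR : a * (e/a) + (1-a) * ((γ*B)/(1-a)) = e + γ * B := by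
    field_simp
  linarith [hgm]

end BetaBound

theorem betaErr_upper_bound {d : ℕ} (hd : 1 ≤ d)
    (ρ σ : Matrix (Fin d) (Fin d) ℂ)
    (hρ : ρ.PosSemidef) (hσ : σ.PosSemidef)
    (hρ1 : ρ.trace = 1) (hσ1 : σ.trace = 1)
    {ε α : ℝ} (hε : ε ∈ Set.Ioo (0 : ℝ) 1) (hα : α ∈ Set.Ioo (0 : ℝ) 1)
    (hQ : 0 < ((mPow ρ α * mPow σ (1 - α)).trace).re) :
    betaErr ε ρ σ ≤ Real.exp (- Dold ρ σ α + α / (1 - α) * Real.log ε⁻¹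
      - (- (α * Real.log α) - (1 - α) * Real.log (1 - α)) / (1 - α)) := by
  open BetaBound in
  obtain ⟨hε0, hε1⟩ := hε
  have hα0 := hα.1
  have hα1 := hα.2
  have h1a : (0:ℝ) < 1 - α := by linarith
  set Q : ℝ := ((mPow ρ α * mPow σ (1 - α)).trace).re with hQdef
  set Bd : ℝ := Real.exp (- Dold ρ σ α + α / (1 - α) * Real.log ε⁻¹
      - (- (α * Real.log α) - (1 - α) * Real.log (1 - α)) / (1 - α)) with hBd
  have hBpos : 0 < Bd := Real.exp_pos _
  have hDold : Dold ρ σ α = (α - 1)⁻¹ * Real.log Q := by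
    unfold Dold; rw [← hQdef]
  have key : ∀ γ : ℝ, 0 < γ → γ ^ (1-α) * Q ≤ ε + γ * Bd := by
    intro γ hγ
    have h := BetaBound.key_scalar hQ hε0 hα γ hγ
    rw [hBd, hDold]
    exact h
  -- the Neyman–Pearson test family
  have testex : ∀ γ : ℝ, ∃ T : Matrix (Fin d) (Fin d) ℂ, 0 < γ →
      (T.PosSemidef ∧ ((1:Matrix (Fin d) (Fin d) ℂ) - T).PosSemidef ∧
      ((ρ * (1 - T)).trace).re + γ * ((σ * T).trace).re ≤ γ ^ (1-α) * Q) := by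
    intro γ
    by_cases hγ : 0 < γ
    · obtain ⟨T, h1, h2, h3⟩ := BetaBound.audenaert_scaled hρ hσ hα hγ
      exact ⟨T, fun _ => ⟨h1, h2, h3⟩⟩
    · exact ⟨0, fun h => absurd h hγ⟩
  choose Tf hTf using testex
  set x : ℝ → ℝ := fun γ => ((ρ * (1 - Tf γ)).trace).re with hx
  set y : ℝ → ℝ := fun γ => ((σ * Tf γ).trace).re with hy
  have hx0 : ∀ γ, 0 < γ → 0 ≤ x γ := fun γ hγ =>
    BetaBound.pairing_nonneg hρ ((hTf γ hγ).2.1)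
  have hy0 : ∀ γ, 0 < γ → 0 ≤ y γ := fun γ hγ =>
    BetaBound.pairing_nonneg hσ ((hTf γ hγ).1)
  have hxyB : ∀ γ, 0 < γ → x γ + γ * y γ ≤ ε + γ * Bd :=
    fun γ hγ => le_trans ((hTf γ hγ).2.2) (key γ hγ)
  have hmem : ∀ T : Matrix (Fin d) (Fin d) ℂ, T.PosSemidef →
      ((1:Matrix (Fin d) (Fin d) ℂ) - T).PosSemidef → ((ρ * (1 - T)).trace).re ≤ ε →
      betaErr ε ρ σ ≤ ((σ * T).trace).re := by
    intro T h1 h2 h3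
    unfold betaErr
    apply csInf_le
    · refine ⟨0, fun r hr => ?_⟩
      obtain ⟨T', h1', -, -, rfl⟩ := hr
      exact BetaBound.pairing_nonneg hσ h1'
    · exact ⟨T, h1, h2, h3, rfl⟩
  set γL : ℝ := (ε/Q) ^ ((1-α)⁻¹) with hγL
  have hγLpos : 0 < γL := Real.rpow_pos_of_pos (div_pos hε0 hQ) _
  have hγLval : γL ^ (1-α) * Q = ε := by
    rw [hγL, ← Real.rpow_mul (div_pos hε0 hQ).le, inv_mul_cancel₀ h1a.ne', Real.rpow_one,
      div_mul_cancel₀ _ hQ.ne']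
  have hxγL : x γL ≤ ε := by
    have h := (hTf γL hγLpos).2.2
    have h2 := mul_nonneg hγLpos.le (hy0 γL hγLpos)
    rw [hγLval] at h
    linarith
  have hyB : ∀ γ, γL ≤ γ → (Q/Bd) ^ (α⁻¹) ≤ γ → y γ ≤ Bd := by
    intro γ h1 h2
    have hγpos : 0 < γ := lt_of_lt_of_le hγLpos h1
    have hga : Q/Bd ≤ γ ^ α := by
      have hbase : 0 < (Q/Bd) ^ (α⁻¹) := Real.rpow_pos_of_pos (div_pos hQ hBpos) _
      calc Q/Bd = ((Q/Bd) ^ (α⁻¹)) ^ α := by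
            rw [← Real.rpow_mul (div_pos hQ hBpos).le, inv_mul_cancel₀ hα0.ne',
              Real.rpow_one]
      _ ≤ γ ^ α := Real.rpow_le_rpow hbase.le h2 hα0.le
    have hQle : Q ≤ γ ^ α * Bd := by
      rw [div_le_iff₀ hBpos] at hga
      linarith
    have h3 : γ ^ (1-α) * Q ≤ γ * Bd := by
      calc γ ^ (1-α) * Q ≤ γ ^ (1-α) * (γ ^ α * Bd) :=
            mul_le_mul_of_nonneg_left hQle (by positivity)
      _ = (γ ^ (1-α) * γ ^ α) * Bd := by ring
      _ = γ * Bd := by rw [← Real.rpow_add hγpos]; norm_num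
    have h4 := (hTf γ hγpos).2.2
    have h5 := hx0 γ hγpos
    have h6 : γ * y γ ≤ γ * Bd := by linarith
    exact le_of_mul_le_mul_left h6 hγpos
  set S : Set ℝ := {γ | γL ≤ γ ∧ x γ ≤ ε} with hS
  have hSne : γL ∈ S := ⟨le_refl _, hxγL⟩
  by_cases hbd : BddAbove S
  · set γb : ℝ := sSup S with hγb
    have hγbL : γL ≤ γb := le_csSup hbd hSne
    have hmain : ∀ δ : ℝ, 0 < δ → betaErr ε ρ σ ≤ Bd + (2/(γL*γL)) * δ := by
      intro δ hδ
      obtain ⟨γ1, hγ1S, hγ1gt⟩ := exists_lt_of_lt_csSup ⟨γL, hSne⟩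
        (show γb - δ < γb by linarith)
      have hγ1L : γL ≤ γ1 := hγ1S.1
      have hγ1pos : 0 < γ1 := lt_of_lt_of_le hγLpos hγ1L
      have hγ1le : γ1 ≤ γb := le_csSup hbd hγ1S
      set γ2 : ℝ := γb + δ with hγ2def
      have hγ2pos : 0 < γ2 := by rw [hγ2def]; linarith
      have hγ2L : γL ≤ γ2 := by rw [hγ2def]; linarith
      have hγ12 : γ1 ≤ γ2 := by rw [hγ2def]; linarith
      have hx2 : ε < x γ2 := by
        by_contra h
        have hmemS : γ2 ∈ S := ⟨hγ2L, not_lt.mp h⟩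
        have := le_csSup hbd hmemS
        rw [hγ2def] at this
        linarith
      set u : ℝ := ε - x γ1 with hu
      set vv : ℝ := x γ2 - ε with hv
      have hu0 : 0 ≤ u := by rw [hu]; linarith [hγ1S.2]
      have hv0 : 0 < vv := by rw [hv]; linarith
      have huv : 0 < u + vv := by linarith
      set t : ℝ := u / (u + vv) with ht
      have ht0 : 0 ≤ t := div_nonneg hu0 huv.le
      have ht1 : t ≤ 1 := (div_le_one huv).mpr (by linarith)
      set T' := (1 - t) • Tf γ1 + t • Tf γ2 with hT'
      have hT'psd : T'.PosSemidef :=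
        (BetaBound.psd_real_smul (by linarith) (hTf γ1 hγ1pos).1).add
          (BetaBound.psd_real_smul ht0 (hTf γ2 hγ2pos).1)
      have h1T' : (1:Matrix (Fin d) (Fin d) ℂ) - T'
          = (1 - t) • (1 - Tf γ1) + t • (1 - Tf γ2) := by
        rw [hT']; module
      have h1T'psd : ((1:Matrix (Fin d) (Fin d) ℂ) - T').PosSemidef := by
        rw [h1T']
        exact (BetaBound.psd_real_smul (by linarith) (hTf γ1 hγ1pos).2.1).add
          (BetaBound.psd_real_smul ht0 (hTf γ2 hγ2pos).2.1)
      have hxT' : ((ρ * (1 - T')).trace).re = (1-t) * x γ1 + t * x γ2 := by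
        rw [h1T', Matrix.mul_add, mul_smul_comm, mul_smul_comm, Matrix.trace_add,
          Matrix.trace_smul, Matrix.trace_smul, Complex.add_re, Complex.real_smul,
          Complex.real_smul, Complex.re_ofReal_mul, Complex.re_ofReal_mul]
      have hyT' : ((σ * T').trace).re = (1-t) * y γ1 + t * y γ2 := by
        rw [hT', Matrix.mul_add, mul_smul_comm, mul_smul_comm, Matrix.trace_add,
          Matrix.trace_smul, Matrix.trace_smul, Complex.add_re, Complex.real_smul,
          Complex.real_smul, Complex.re_ofReal_mul, Complex.re_ofReal_mul]
      have hteq : t * (u + vv) = u := div_mul_cancel₀ u huv.ne'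
      have hxval : (1-t) * x γ1 + t * x γ2 = ε := by
        have hx21 : x γ2 - x γ1 = u + vv := by rw [hu, hv]; ring
        have h2 : (1-t) * x γ1 + t * x γ2 = x γ1 + t * (x γ2 - x γ1) := by ring
        rw [h2, hx21, hteq, hu]
        ring
      have hbound := hmem T' hT'psd h1T'psd (by rw [hxT', hxval])
      rw [hyT'] at hbound
      have hy1 : y γ1 ≤ Bd + u/γ1 := by
        have h := hxyB γ1 hγ1pos
        have h2 : γ1 * y γ1 ≤ γ1 * (Bd + u/γ1) := by
          have h3 : γ1 * (Bd + u/γ1) = γ1 * Bd + u := by field_simp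
          rw [h3, hu]
          linarith
        exact le_of_mul_le_mul_left h2 hγ1pos
      have hy2 : y γ2 ≤ Bd - vv/γ2 := by
        have h := hxyB γ2 hγ2pos
        have h2 : γ2 * y γ2 ≤ γ2 * (Bd - vv/γ2) := by
          have h3 : γ2 * (Bd - vv/γ2) = γ2 * Bd - vv := by field_simp
          rw [h3, hv]
          linarith
        exact le_of_mul_le_mul_left h2 hγ2pos
      have h1t : 0 ≤ 1 - t := by linarith
      have h1mt : 1 - t = vv/(u+vv) := by
        rw [ht]
        field_simp
        ring
      have hw : (1-t) * u = t * vv := by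
        rw [h1mt, ht]
        ring
      have huε : u ≤ 1 := by
        rw [hu]
        linarith [hx0 γ1 hγ1pos]
      have hwle : t * vv ≤ 1 := by
        calc t * vv = (1-t) * u := hw.symm
        _ ≤ 1 * u := mul_le_mul_of_nonneg_right (by linarith) hu0
        _ ≤ 1 := by rw [one_mul]; exact huε
      have hfracnn : 0 ≤ 1/γ1 - 1/γ2 := by
        have := one_div_le_one_div_of_le hγ1pos hγ12
        linarith
      have hfrac : 1/γ1 - 1/γ2 ≤ (2*δ)/(γL*γL) := by
        have heq : 1/γ1 - 1/γ2 = (γ2-γ1)/(γ1*γ2) := by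
          rw [div_sub_div _ _ hγ1pos.ne' hγ2pos.ne', one_mul, mul_one]
        rw [heq]
        refine div_le_div₀ (by positivity) (by rw [hγ2def]; linarith) (by positivity)
          (mul_le_mul hγ1L hγ2L hγLpos.le (by linarith))
      have hcomb : (1-t) * y γ1 + t * y γ2 ≤ Bd + (t*vv) * (1/γ1 - 1/γ2) := by
        have e1 : (1-t)*(Bd + u/γ1) + t*(Bd - vv/γ2) = Bd + ((1-t)*u/γ1 - t*vv/γ2) := by
          ring
        have e2 : (1-t)*u/γ1 - t*vv/γ2 = (t*vv)*(1/γ1 - 1/γ2) := by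
          rw [show (1-t)*u/γ1 = ((1-t)*u)/γ1 by ring, hw]
          ring
        have m1 := mul_le_mul_of_nonneg_left hy1 h1t
        have m2 := mul_le_mul_of_nonneg_left hy2 ht0
        linarith
      have hfinal : (1-t) * y γ1 + t * y γ2 ≤ Bd + (2/(γL*γL)) * δ := by
        have h3 : (t*vv) * (1/γ1 - 1/γ2) ≤ 1 * (1/γ1 - 1/γ2) :=
          mul_le_mul_of_nonneg_right hwle hfracnn
        have h4 : (2*δ)/(γL*γL) = (2/(γL*γL)) * δ := by ring
        linarith
      exact hbound.trans hfinal
    by_contra hcon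
    push_neg at hcon
    have he : 0 < betaErr ε ρ σ - Bd := by linarith
    have h := hmain ((betaErr ε ρ σ - Bd)*(γL*γL)/4) (by positivity)
    have hcalc : (2/(γL*γL)) * ((betaErr ε ρ σ - Bd)*(γL*γL)/4)
        = (betaErr ε ρ σ - Bd)/2 := by
      field_simp
      ring
    rw [hcalc] at h
    linarith
  · obtain ⟨γ, hγS, hγgt⟩ := not_bddAbove_iff.mp hbd (max γL ((Q/Bd) ^ (α⁻¹)))
    have hγL' : γL ≤ γ := le_trans (le_max_left _ _) hγgt.le
    have hγ2' : (Q/Bd) ^ (α⁻¹) ≤ γ := le_trans (le_max_right _ _) hγgt.le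
    have hγpos : 0 < γ := lt_of_lt_of_le hγLpos hγL'
    exact (hmem (Tf γ) (hTf γ hγpos).1 (hTf γ hγpos).2.1 hγS.2).trans
      (hyB γ hγS.1 hγ2')
end

section
/- Let ω_1, …, ω_r (r ≥ 1) be states on a finite-dimensional space, let τ be a state on the same space, and let ε ∈ (0,1). Then β_ε({ω_1,…,ω_r}‖τ) ≤ β_{ε/r}((1/r)·Σ_{i=1}^r ω_i‖τ). -/
open scoped BigOperators ComplexOrder

/-- The optimal type II error for testing the composite null-hypothesis M
against τ with the worst-case type I error bounded by ε. -/
noncomputable def betaSet {ι : Type*} [Fintype ι] [DecidableEq ι]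
    (ε : ℝ) (M : Set (Matrix ι ι ℂ)) (τ : Matrix ι ι ℂ) : ℝ :=
  sInf {x : ℝ | ∃ T : Matrix ι ι ℂ,
    T.PosSemidef ∧ (1 - T).PosSemidef ∧
    (∀ ω ∈ M, ((ω * (1 - T)).trace).re ≤ ε) ∧ x = ((τ * T).trace).re}

lemma psd_trace_re_nonneg {ι : Type*} [Fintype ι] [DecidableEq ι]
    {M : Matrix ι ι ℂ} (hM : M.PosSemidef) : 0 ≤ (M.trace).re := by
  show 0 ≤ (∑ i, M i i).re
  rw [Complex.re_sum]
  refine Finset.sum_nonneg fun i _ => ?_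
  have := hM.re_dotProduct_nonneg (Pi.single i 1)
  simpa [dotProduct, Matrix.mulVec, Pi.single_apply] using this

open scoped MatrixOrder in
lemma trace_mul_re_nonneg {ι : Type*} [Fintype ι] [DecidableEq ι]
    {A B : Matrix ι ι ℂ} (hA : A.PosSemidef) (hB : B.PosSemidef) :
    0 ≤ ((A * B).trace).re := by
  have h1 : A * B = CFC.sqrt A * (CFC.sqrt A * B) := by
    rw [← mul_assoc, CFC.sqrt_mul_sqrt_self A hA.nonneg]
  have h2 : (A * B).trace = (CFC.sqrt A * B * CFC.sqrt A).trace := by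
    rw [h1, ← Matrix.trace_mul_comm, mul_assoc]
  rw [h2]
  have hpsd : (CFC.sqrt A * B * CFC.sqrt A).PosSemidef := by
    have := hB.mul_mul_conjTranspose_same (CFC.sqrt A)
    rwa [(Matrix.nonneg_iff_posSemidef.mp (CFC.sqrt_nonneg A)).isHermitian.eq] at this
  exact psd_trace_re_nonneg hpsd

theorem betaSet_le_betaSet_average {ι : Type*} [Fintype ι] [DecidableEq ι]
    {r : ℕ} (hr : 1 ≤ r)
    (ω : Fin r → Matrix ι ι ℂ)
    (hω : ∀ i, (ω i).PosSemidef) (hω1 : ∀ i, (ω i).trace = 1)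
    (τ : Matrix ι ι ℂ) (hτ : τ.PosSemidef) (hτ1 : τ.trace = 1)
    {ε : ℝ} (hε : ε ∈ Set.Ioo (0 : ℝ) 1) :
    betaSet ε {σ | ∃ i, σ = ω i} τ ≤
      betaSet (ε / r) {((r : ℂ))⁻¹ • ∑ i, ω i} τ := by
  have hr0 : (0:ℝ) < r := by exact_mod_cast hr
  apply csInf_le_csInf
  · -- bounded below by 0
    refine ⟨0, fun x hx => ?_⟩
    obtain ⟨T, hT, _, _, hxval⟩ := hx
    rw [hxval]
    exact trace_mul_re_nonneg hτ hT
  · -- RHS set nonempty: take T = 1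
    refine ⟨(τ * 1).trace.re, 1, Matrix.PosSemidef.one, by simpa using Matrix.PosSemidef.zero, ?_, rfl⟩
    intro σ hσ
    simp only [sub_self, mul_zero, Matrix.trace_zero, Complex.zero_re]
    exact div_nonneg hε.1.le (Nat.cast_nonneg r)
  · -- subset
    rintro x ⟨T, hT, hIT, hfeas, hxval⟩
    refine ⟨T, hT, hIT, ?_, hxval⟩
    rintro σ ⟨i, rfl⟩
    have hkey := hfeas _ rfl
    have hexp : ((((r : ℂ))⁻¹ • ∑ j, ω j) * (1 - T)).trace.re
        = (r:ℝ)⁻¹ * ∑ j, ((ω j * (1 - T)).trace).re := by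
      rw [Matrix.smul_mul, Matrix.trace_smul, smul_eq_mul, Finset.sum_mul,
        Matrix.trace_sum,
        (by push_cast; ring : ((r:ℂ))⁻¹ = (((r:ℝ)⁻¹ : ℝ) : ℂ)),
        Complex.re_ofReal_mul, Complex.re_sum]
    rw [hexp] at hkey
    have hle : ((ω i * (1 - T)).trace).re ≤ ∑ j, ((ω j * (1 - T)).trace).re := by
      refine Finset.single_le_sum (fun j _ => trace_mul_re_nonneg (hω j) hIT) (Finset.mem_univ i)
    have : (r:ℝ)⁻¹ * ((ω i * (1 - T)).trace).re ≤ ε / r := by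
      calc (r:ℝ)⁻¹ * ((ω i * (1 - T)).trace).re
          ≤ (r:ℝ)⁻¹ * ∑ j, ((ω j * (1 - T)).trace).re := by
            exact mul_le_mul_of_nonneg_left hle (by positivity)
        _ ≤ ε / r := hkey
    have h2 : ((ω i * (1 - T)).trace).re ≤ ε := by
      rw [div_eq_inv_mul] at this
      exact le_of_mul_le_mul_left (by linarith [this]) (by positivity : (0:ℝ) < (r:ℝ)⁻¹)
    exact h2
end
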